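/- Consider the Dickson nearfield setup and R-subgroups. Let m be a positive integer and let T be an R-subgroup of F^m with seed number s(T) = 2. Then |T| = (q^n)^k for an integer k (the R-dimension of T) satisfying 2 ≤ k ≤ q^n + 1. -/

import Mathlib

/-- `(q, n)` is a Dickson pair: `q` is a prime power, every prime divisor of `n`
divides `q - 1`, and if `q ≡ 3 (mod 4)` then `4` does not divide `n`. -/
def IsDicksonPair (q n : ℕ) : Prop :=
  0 < q ∧ 0 < n ∧ (∃ p l : ℕ, Nat.Prime p ∧ 0 < l ∧ q = p ^ l) ∧
    (∀ p : ℕ, Nat.Prime p → p ∣ n → p ∣ q - 1) ∧ (q % 4 = 3 → ¬ 4 ∣ n)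

/-- `[k]_q = 1 + q + q^2 + ⋯ + q^(k-1)`. -/
def dq (q k : ℕ) : ℕ := ∑ i ∈ Finset.range k, q ^ i

/-- `x` lies in the coset `g^([k]_q) • H` where `H = ⟨g^n⟩`. -/
def inCoset {F : Type*} [Field F] (g : F) (q n k : ℕ) (x : F) : Prop :=
  ∃ j : ℕ, x = g ^ dq q k * (g ^ n) ^ j

/-- `T ⊆ F^m` is an `R`-subgroup: an additive subgroup closed under the
componentwise Dickson nearfield scalar multiplication `circ` on the right. -/
def IsRSubgroup {F : Type*} [Field F] {m : ℕ} (circ : F → F → F)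
    (T : Set (Fin m → F)) : Prop :=
  0 ∈ T ∧ (∀ a ∈ T, ∀ b ∈ T, a + b ∈ T) ∧ (∀ a ∈ T, -a ∈ T) ∧
    ∀ v ∈ T, ∀ r : F, (fun i => circ (v i) r) ∈ T

namespace DNF

lemma dq_succ (q k : ℕ) : dq q (k+1) = dq q k + q ^ k := Finset.sum_range_succ _ _

lemma dq_zero (q : ℕ) : dq q 0 = 0 := rfl

lemma dq_one (q : ℕ) : dq q 1 = 1 := by simp [dq]

lemma dq_two (q : ℕ) : dq q 2 = 1 + q := by simp [dq, Finset.sum_range_succ]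

lemma dq_add (q a b : ℕ) : dq q (a + b) = dq q a + q ^ a * dq q b := by
  induction b with
  | zero => simp [dq]
  | succ b ih =>
    have : a + (b+1) = (a+b) + 1 := by omega
    rw [this, dq_succ, ih, dq_succ, pow_add]
    ring

lemma dq_mul (q a b : ℕ) : dq q (a * b) = dq q a * dq (q ^ a) b := by
  induction b with
  | zero => simp [dq]
  | succ b ih =>
    have : a * (b + 1) = a * b + a := by ring
    rw [this, dq_add, ih, dq_succ, ← pow_mul]
    ring

lemma dq_pos {q d : ℕ} (hq : 0 < q) (hd : 0 < d) : 0 < dq q d := by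
  cases d with
  | zero => omega
  | succ d => rw [dq_succ]; positivity

lemma dq_modeq {q p : ℕ} (hq : 0 < q) (hp : p ∣ q - 1) (d : ℕ) : dq q d ≡ d [MOD p] := by
  have h1 : q ≡ 1 [MOD p] := ((Nat.modEq_iff_dvd' hq).mpr hp).symm
  induction d with
  | zero => rfl
  | succ d ih =>
    rw [dq_succ]
    calc dq q d + q ^ d ≡ d + 1 ^ d [MOD p] := Nat.ModEq.add ih (h1.pow d)
      _ = d + 1 := by rw [one_pow]

lemma dickson_q_pos {q n : ℕ} (h : IsDicksonPair q n) : 2 ≤ q := by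
  obtain ⟨p, l, hp, hl, rfl⟩ := h.2.2.1
  calc 2 ≤ p := hp.two_le
    _ = p ^ 1 := (pow_one p).symm
    _ ≤ p ^ l := Nat.pow_le_pow_right hp.pos hl

lemma dickson_step {q n : ℕ} (h : IsDicksonPair q n) (hn : 1 < n) :
    IsDicksonPair (q ^ n.minFac) (n / n.minFac) := by
  obtain ⟨hq0, hn0, ⟨p, l, hp, hl, hq⟩, hdiv, h4⟩ := h
  have hpf : (n.minFac).Prime := Nat.minFac_prime (by omega)
  have hpd : n.minFac ∣ n := Nat.minFac_dvd n
  refine ⟨by positivity, Nat.div_pos (Nat.le_of_dvd hn0 hpd) hpf.pos, 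
    ⟨p, l * n.minFac, hp, Nat.mul_pos hl hpf.pos, by rw [hq, pow_mul]⟩, ?_, ?_⟩
  · intro r hr hrd
    have h1 : r ∣ q - 1 := hdiv r hr (hrd.trans (Nat.div_dvd_of_dvd hpd))
    have h2 : q - 1 ∣ q ^ n.minFac - 1 := by
      simpa using Nat.sub_dvd_pow_sub_pow q 1 n.minFac
    exact h1.trans h2
  · intro hq3 h4d
    have hmod : q ^ n.minFac % 4 = (q % 4) ^ n.minFac % 4 := Nat.pow_mod q n.minFac 4
    have h2le : 2 ≤ n.minFac := hpf.two_le
    have hq3' : q % 4 = 3 := by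
      rcases (by omega : q % 4 = 0 ∨ q % 4 = 1 ∨ q % 4 = 2 ∨ q % 4 = 3) with h|h|h|h
      · rw [h, Nat.zero_pow (by omega)] at hmod; omega
      · rw [h, one_pow] at hmod; omega
      · exfalso
        have hdd : 4 ∣ (2:ℕ) ^ n.minFac := by
          have h22 : (2:ℕ)^2 ∣ 2 ^ n.minFac := Nat.pow_dvd_pow 2 h2le
          simpa using h22
        rw [h] at hmod
        omega
      · exact h
    exact h4 hq3' (h4d.trans (Nat.div_dvd_of_dvd hpd))

lemma dickson_n_dvd_dq : ∀ n q, IsDicksonPair q n → n ∣ dq q n := by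
  intro n
  induction n using Nat.strong_induction_on with
  | _ n ih =>
    intro q hqn
    rcases eq_or_lt_of_le (show 1 ≤ n from hqn.2.1) with h1 | h1
    · simp [← h1]
    set p := n.minFac with hpdef
    have hpf : p.Prime := Nat.minFac_prime (by omega)
    have hpd : p ∣ n := Nat.minFac_dvd n
    have hne : n = p * (n / p) := (Nat.mul_div_cancel' hpd).symm
    have hlt : n / p < n := Nat.div_lt_self (by omega) hpf.one_lt
    have hIH := ih (n / p) hlt (q ^ p) (dickson_step hqn h1)
    have hpq : p ∣ dq q p := by
      have hm : dq q p % p = p % p := dq_modeq hqn.1 (hqn.2.2.2.1 p hpf hpd) p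
      have h0 : p % p = 0 := Nat.mod_self p
      exact Nat.dvd_of_mod_eq_zero (by omega)
    calc n = p * (n / p) := hne
      _ ∣ dq q p * dq (q ^ p) (n / p) := mul_dvd_mul hpq hIH
      _ = dq q (p * (n / p)) := (dq_mul q p (n/p)).symm
      _ = dq q n := by rw [← hne]

lemma dq_p_modeq_sq {q p : ℕ} (hp : p.Prime) (hodd : p ≠ 2) (hq : 0 < q) (hd : p ∣ q - 1) :
    dq q p ≡ p [MOD p * p] := by
  obtain ⟨a, ha⟩ := hd
  have hqa : q = 1 + p * a := by omega
  have hq1 : q ≡ 1 + p * a [MOD p * p] := by rw [hqa]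
  have hpow : ∀ i, q ^ i ≡ 1 + i * (p * a) [MOD p * p] := by
    intro i
    induction i with
    | zero => simpa using Nat.ModEq.refl 1
    | succ i ihh =>
      calc q ^ (i+1) = q ^ i * q := pow_succ q i
        _ ≡ (1 + i * (p*a)) * (1 + p * a) [MOD p*p] := Nat.ModEq.mul ihh hq1
        _ = (1 + (i+1) * (p*a)) + (p*p) * (i * a * a) := by ring
        _ ≡ (1 + (i+1) * (p*a)) + 0 [MOD p*p] :=
            Nat.ModEq.add_left _ (Nat.modEq_zero_iff_dvd.mpr ⟨i * a * a, rfl⟩)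
        _ = 1 + (i+1) * (p*a) := by ring
  have hsum : ∀ N, dq q N ≡ N + (∑ i ∈ Finset.range N, i) * (p * a) [MOD p * p] := by
    intro N
    induction N with
    | zero => simpa [dq] using Nat.ModEq.refl 0
    | succ N ihh =>
      rw [dq_succ, Finset.sum_range_succ]
      calc dq q N + q ^ N ≡ (N + (∑ i ∈ Finset.range N, i) * (p*a)) + (1 + N * (p*a)) [MOD p*p] :=
            Nat.ModEq.add ihh (hpow N)
        _ = (N + 1) + ((∑ i ∈ Finset.range N, i) + N) * (p * a) := by ring
  obtain ⟨c, hc⟩ : ∃ c, (∑ i ∈ Finset.range p, i) = p * c := by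
    obtain ⟨c, hc⟩ := hp.odd_of_ne_two hodd
    refine ⟨c, ?_⟩
    have h2 : (∑ i ∈ Finset.range p, i) * 2 = p * (p - 1) := Finset.sum_range_id_mul_two p
    have h3 : p * (p - 1) = (p * c) * 2 := by
      have : p - 1 = 2 * c := by omega
      rw [this]; ring
    omega
  have hfin := hsum p
  rw [hc] at hfin
  calc dq q p ≡ p + p * c * (p * a) [MOD p*p] := hfin
    _ = p + (p*p) * (c * a) := by ring
    _ ≡ p + 0 [MOD p*p] := Nat.ModEq.add_left _ (Nat.modEq_zero_iff_dvd.mpr ⟨c * a, rfl⟩)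
    _ = p := by ring

lemma dickson_dq_dvd : ∀ n q, IsDicksonPair q n → ∀ d, n ∣ dq q d → n ∣ d := by
  intro n
  induction n using Nat.strong_induction_on with
  | _ n ih =>
    intro q hqn d hdvd
    rcases eq_or_lt_of_le (show 1 ≤ n from hqn.2.1) with h1 | h1
    · rw [← h1]; exact one_dvd d
    rcases Nat.eq_zero_or_pos d with rfl | hd0
    · exact dvd_zero n
    set p := n.minFac with hpdef
    have hpf : p.Prime := Nat.minFac_prime (by omega)
    have hpd : p ∣ n := Nat.minFac_dvd n
    have hqpos := hqn.1
    have hq2 := dickson_q_pos hqn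
    have hq1d : p ∣ q - 1 := hqn.2.2.2.1 p hpf hpd
    have hne : n = p * (n / p) := (Nat.mul_div_cancel' hpd).symm
    have hlt : n / p < n := Nat.div_lt_self (by omega) hpf.one_lt
    have hpdq : p ∣ dq q d := hpd.trans hdvd
    have hpd' : p ∣ d :=
      Nat.modEq_zero_iff_dvd.mp
        ((dq_modeq hqpos hq1d d).symm.trans (Nat.modEq_zero_iff_dvd.mpr hpdq))
    obtain ⟨d', rfl⟩ := hpd'
    have hsplit : dq q (p * d') = dq q p * dq (q ^ p) d' := dq_mul q p d'
    have hppq : p ∣ dq q p :=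
      Nat.modEq_zero_iff_dvd.mp
        ((dq_modeq hqpos hq1d p).trans (Nat.modEq_zero_iff_dvd.mpr dvd_rfl))
    obtain ⟨u, hu⟩ := hppq
    have hcop : Nat.Coprime (n / p) u := by
      by_contra hnc
      obtain ⟨r, hr, hrn, hru⟩ := Nat.Prime.not_coprime_iff_dvd.mp hnc
      have hrn' : r ∣ n := hrn.trans (Nat.div_dvd_of_dvd hpd)
      have hrq : r ∣ q - 1 := hqn.2.2.2.1 r hr hrn'
      have hrdq : r ∣ dq q p := hru.trans ⟨p, by rw [hu]; ring⟩
      have hrp : r ∣ p :=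
        Nat.modEq_zero_iff_dvd.mp
          ((dq_modeq hqpos hrq p).symm.trans (Nat.modEq_zero_iff_dvd.mpr hrdq))
      have hrp' : r = p := (Nat.prime_dvd_prime_iff_eq hr hpf).mp hrp
      subst hrp'
      rcases eq_or_ne p 2 with hp2 | hp2
      · have h4n : 4 ∣ n := by
          obtain ⟨w, hw⟩ := hrn
          rw [hp2] at hne hw
          omega
        have hqodd : q % 2 = 1 := by
          obtain ⟨w, hw⟩ := hq1d
          rw [hp2] at hw
          omega
        have hq41 : q % 4 = 1 := by
          rcases (by omega : q % 4 = 1 ∨ q % 4 = 3) with h | h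
          · exact h
          · exact absurd h4n (hqn.2.2.2.2 h)
        have hdq2 : dq q 2 = 1 + q := dq_two q
        obtain ⟨w, hw⟩ := hru
        rw [hp2, hdq2] at hu
        rw [hp2] at hw
        omega
      · have hsq := dq_p_modeq_sq hpf hp2 (by omega) hq1d
        obtain ⟨w, hw⟩ := hru
        rw [hu, hw] at hsq
        have h0 : p * (p * w) ≡ 0 [MOD p * p] := Nat.modEq_zero_iff_dvd.mpr ⟨w, by ring⟩
        have hp0 : (p : ℕ) ≡ 0 [MOD p * p] := hsq.symm.trans h0
        have hdv := Nat.modEq_zero_iff_dvd.mp hp0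
        have hle := Nat.le_of_dvd (by have := hpf.two_le; omega) hdv
        have h22 := hpf.two_le
        nlinarith
    have hmain : (n / p) ∣ u * dq (q ^ p) d' := by
      have hh1 : p * (n / p) ∣ p * (u * dq (q ^ p) d') := by
        rw [← hne]
        calc n ∣ dq q (p * d') := hdvd
          _ = (p * u) * dq (q ^ p) d' := by rw [hsplit, hu]
          _ = p * (u * dq (q ^ p) d') := by ring
      exact (Nat.mul_dvd_mul_iff_left hpf.pos).mp hh1
    have hfac : (n / p) ∣ dq (q ^ p) d' := hcop.dvd_of_dvd_mul_left hmain
    have hdd : (n / p) ∣ d' := ih (n / p) hlt (q ^ p) (dickson_step hqn h1) d' hfac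
    calc n = p * (n / p) := hne
      _ ∣ p * d' := mul_dvd_mul_left p hdd

lemma geom_mul {q : ℕ} (n : ℕ) (hq : 1 ≤ q) : (q - 1) * dq q n + 1 = q ^ n := by
  obtain ⟨Q, rfl⟩ : ∃ Q, q = Q + 1 := ⟨q - 1, by omega⟩
  simp only [Nat.add_sub_cancel]
  induction n with
  | zero => simp [dq]
  | succ n ih =>
    calc Q * dq (Q+1) (n+1) + 1 = (Q * dq (Q+1) n + 1) + Q * (Q+1)^n := by
          rw [dq_succ]; ring
      _ = (Q+1)^n + Q*(Q+1)^n := by rw [ih]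
      _ = (Q+1)^(n+1) := by ring

end DNF


/-- Dickson nearfield setup: if an `R`-subgroup `T` of `F^m` has seed number `2`
(`gen` sends a set of vectors to the smallest `R`-subgroup containing it), then
`|T| = (q^n)^k` for some `k` (the `R`-dimension) with `2 ≤ k ≤ q^n + 1`. -/
theorem Rdim_le_of_seed_number_two {F : Type*} [Field F] [Fintype F]
    (q n : ℕ) (hqn : IsDicksonPair q n)
    (hcard : Fintype.card F = q ^ n)
    (g : F) (hg : ∀ x : F, x ≠ 0 → ∃ j : ℕ, x = g ^ j)
    (circ : F → F → F)
    (hcirc0 : ∀ lam : F, circ 0 lam = 0)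
    (hcirc : ∀ k : ℕ, 1 ≤ k → k ≤ n → ∀ x : F, inCoset g q n k x →
      ∀ lam : F, circ x lam = x * lam ^ q ^ k)
    (m : ℕ) (hm : 0 < m)
    (gen : Set (Fin m → F) → Set (Fin m → F))
    (hgen : ∀ V : Set (Fin m → F), IsRSubgroup circ (gen V) ∧ V ⊆ gen V ∧
      ∀ S : Set (Fin m → F), IsRSubgroup circ S → V ⊆ S → gen V ⊆ S)
    (T : Set (Fin m → F)) (hT : IsRSubgroup circ T)
    (hseed : (∃ V : Finset (Fin m → F), V.card = 2 ∧ gen ↑V = T) ∧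
      ∀ V : Finset (Fin m → F), gen ↑V = T → 2 ≤ V.card) :
    ∃ k : ℕ, 2 ≤ k ∧ k ≤ q ^ n + 1 ∧ T.ncard = (q ^ n) ^ k := by
  classical
  have hq2 : 2 ≤ q := DNF.dickson_q_pos hqn
  have hn0 : 0 < n := hqn.2.1
  obtain ⟨p, l, hp, hl, hql⟩ := hqn.2.2.1
  have hN2 : 2 ≤ q ^ n := by rw [← hcard]; exact Fintype.one_lt_card
  have hqnp : q ^ n = p ^ (l * n) := by rw [hql, ← pow_mul]
  have hln0 : 0 < l * n := Nat.mul_pos hl hn0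
  -- T as an additive subgroup
  have h0T : (0 : Fin m → F) ∈ T := hT.1
  have hTfin : T.Finite := Set.toFinite T
  -- card T = p ^ e
  obtain ⟨e, hele, hTe⟩ : ∃ e, e ≤ l * n * m ∧ T.ncard = p ^ e := by
    have hTA : ∃ A : AddSubgroup (Fin m → F), (A : Set (Fin m → F)) = T := by
      refine ⟨{ carrier := T, add_mem' := ?_, zero_mem' := h0T, neg_mem' := ?_ }, rfl⟩
      · intro a b ha hb; exact hT.2.1 a ha b hb
      · intro a ha; exact hT.2.2.1 a ha
    obtain ⟨A, hAT⟩ := hTA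
    have hdvd0 : Nat.card A ∣ Nat.card (Fin m → F) := AddSubgroup.card_addSubgroup_dvd_card A
    have hcA : Nat.card A = T.ncard := by
      rw [← Nat.card_coe_set_eq, ← hAT]
      rfl
    have hcP : Nat.card (Fin m → F) = p ^ (l * n * m) := by
      rw [Nat.card_eq_fintype_card, Fintype.card_fun, Fintype.card_fin, hcard, hqnp, ← pow_mul]
    rw [hcA, hcP] at hdvd0
    exact (Nat.dvd_prime_pow hp).mp hdvd0
  -- T.ncard ≠ 1
  have hncard1 : T.ncard ≠ 1 := by
    intro h1
    obtain ⟨w, hw⟩ := Set.ncard_eq_one.mp h1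
    have hw0 : w = 0 := by
      have h00 := h0T
      rw [hw] at h00
      exact (Set.mem_singleton_iff.mp h00).symm
    subst hw0
    have hR0 : IsRSubgroup circ ({0} : Set (Fin m → F)) := by
      refine ⟨Set.mem_singleton 0, ?_, ?_, ?_⟩
      · rintro a ha b hb
        rw [Set.mem_singleton_iff] at *
        rw [ha, hb, add_zero]
      · rintro a ha
        rw [Set.mem_singleton_iff] at *
        rw [ha, neg_zero]
      · rintro w hv r
        rw [Set.mem_singleton_iff] at *
        subst hv
        funext i
        simpa using hcirc0 r
    have hgeq : gen (↑(∅ : Finset (Fin m → F))) = T := by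
      rw [hw]
      apply Set.Subset.antisymm
      · exact (hgen _).2.2 {0} hR0 (by simp)
      · intro x hx
        rw [Set.mem_singleton_iff] at hx
        subst hx
        exact (hgen _).1.1
    have hcon := hseed.2 ∅ hgeq
    simp at hcon
  -- T.ncard ≠ 2
  have hncard2 : T.ncard ≠ 2 := by
    intro h2
    obtain ⟨a, b, hab, hTab⟩ := Set.ncard_eq_two.mp h2
    obtain ⟨w, hw0, hTw⟩ : ∃ w, w ≠ (0 : Fin m → F) ∧ T = {0, w} := by
      have h0m := h0T
      rw [hTab] at h0m
      rcases Set.mem_insert_iff.mp h0m with h | h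
      · refine ⟨b, ?_, by rw [hTab, ← h]⟩
        rw [← h] at hab
        exact fun hbb => hab hbb.symm
      · rw [Set.mem_singleton_iff] at h
        refine ⟨a, ?_, by rw [hTab, ← h, Set.pair_comm]⟩
        rw [← h] at hab
        exact fun haa => hab haa
    have hwT : w ∈ T := by
      rw [hTw]
      exact Set.mem_insert_iff.mpr (Or.inr (Set.mem_singleton w))
    have hgeq : gen ({w} : Set (Fin m → F)) = T := by
      apply Set.Subset.antisymm
      · exact (hgen _).2.2 T hT (by intro x hx; rw [Set.mem_singleton_iff] at hx; subst hx; exact hwT)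
      · rw [hTw]
        intro x hx
        rcases Set.mem_insert_iff.mp hx with h | h
        · subst h; exact (hgen _).1.1
        · rw [Set.mem_singleton_iff] at h
          subst h
          exact (hgen _).2.1 (Set.mem_singleton _)
    have hcon := hseed.2 {w} (by rw [Finset.coe_singleton]; exact hgeq)
    simp at hcon
  -- the two seed vectors
  obtain ⟨Vf, hV2, hVgen⟩ := hseed.1
  obtain ⟨u, v, huv, hVeq⟩ := Finset.card_eq_two.mp hV2
  have hVcoe : (↑Vf : Set (Fin m → F)) = {u, v} := by rw [hVeq]; simp
  by_cases hA : q ^ n = 2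
  · -- tiny case : F = GF(2)
    have hln1 : l * n = 1 := by
      by_contra hc
      have h2 : 2 ≤ l * n := by omega
      have : 2 ^ 2 ≤ p ^ (l * n) :=
        le_trans (Nat.pow_le_pow_left hp.two_le 2) (Nat.pow_le_pow_right hp.pos h2)
      omega
    have hp2 : p = 2 := by
      have := hqnp; rw [hln1, pow_one] at this; omega
    have hone : ∀ t : F, t ≠ 0 → t = 1 := by
      intro t ht
      have h1 := FiniteField.pow_card_sub_one_eq_one t ht
      rw [hcard, hA] at h1
      simpa using h1
    have hscal : ∀ (t r : F), circ t r = t * circ 1 r := by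
      intro t r
      rcases eq_or_ne t 0 with rfl | ht
      · rw [hcirc0, zero_mul]
      · rw [hone t ht, one_mul]
    -- T is contained in the span of u and v
    have hTS : T ⊆ {x : Fin m → F | ∃ a b : F, x = fun i => a * u i + b * v i} := by
      rw [← hVgen]
      apply (hgen ↑Vf).2.2
      · refine ⟨⟨0, 0, by funext i; simp⟩, ?_, ?_, ?_⟩
        · rintro x ⟨a, b, rfl⟩ y ⟨a', b', rfl⟩
          exact ⟨a + a', b + b', by funext i; simp [Pi.add_apply]; ring⟩
        · rintro x ⟨a, b, rfl⟩
          exact ⟨-a, -b, by funext i; simp [Pi.neg_apply]; ring⟩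
        · rintro x ⟨a, b, rfl⟩ r
          exact ⟨a * circ 1 r, b * circ 1 r, by
            funext i; rw [hscal]; ring⟩
      · rw [hVcoe]
        rintro x (rfl | rfl)
        · exact ⟨1, 0, by funext i; simp⟩
        · exact ⟨0, 1, by funext i; simp⟩
    have hcard4 : T.ncard ≤ 4 := by
      have himg : {x : Fin m → F | ∃ a b : F, x = fun i => a * u i + b * v i}
          = Set.range (fun ab : F × F => fun i => ab.1 * u i + ab.2 * v i) := by
        ext x
        constructor
        · rintro ⟨a, b, rfl⟩; exact ⟨(a, b), rfl⟩
        · rintro ⟨⟨a, b⟩, rfl⟩; exact ⟨a, b, rfl⟩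
      have h1 := Set.ncard_le_ncard hTS (by rw [himg]; exact Set.finite_range _)
      have h2 : (Set.range (fun ab : F × F => fun i => ab.1 * u i + ab.2 * v i)).ncard
          ≤ Nat.card (F × F) := by
        rw [← Set.ncard_univ, ← Set.image_univ]
        exact Set.ncard_image_le Set.finite_univ
      have h3 : Nat.card (F × F) = 4 := by
        rw [Nat.card_eq_fintype_card, Fintype.card_prod, hcard, hA]
      rw [himg] at h1
      omega
    have he2 : e = 2 := by
      have hTe2 : T.ncard = 2 ^ e := by rw [hTe, hp2]
      by_contra hne
      rcases (by omega : e = 0 ∨ e = 1 ∨ 3 ≤ e) with rfl | rfl | h3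
      · rw [pow_zero] at hTe2; exact hncard1 hTe2
      · rw [pow_one] at hTe2; exact hncard2 hTe2
      · have h8 : 2 ^ 3 ≤ 2 ^ e := Nat.pow_le_pow_right (by omega) h3
        omega
    refine ⟨2, le_refl 2, by omega, ?_⟩
    rw [hA, hTe, he2, hp2]
  · -- main case
    have hN : 2 < q ^ n := by omega
    have hpowcard : ∀ x : F, x ^ q ^ n = x := by
      intro x
      rw [← hcard]
      exact FiniteField.pow_card x
    have hgne : g ≠ 0 := by
      intro h0
      have hsur : Function.Surjective (fun b : Bool => if b then (1 : F) else 0) := by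
        intro x
        rcases eq_or_ne x 0 with rfl | hx
        · exact ⟨false, rfl⟩
        · obtain ⟨j, hj⟩ := hg x hx
          rcases Nat.eq_zero_or_pos j with rfl | hj0
          · exact ⟨true, by simp [hj]⟩
          · rw [h0, zero_pow (by omega)] at hj
            exact absurd hj hx
      have hcle := Fintype.card_le_of_surjective _ hsur
      rw [hcard, Fintype.card_bool] at hcle
      omega
    have hgc1 : g ^ (q ^ n - 1) = 1 := by
      have h1 := FiniteField.pow_card_sub_one_eq_one g hgne
      rwa [hcard] at h1
    have hndvd : n ∣ q ^ n - 1 := by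
      have h1 : (q - 1) * dq q n + 1 = q ^ n := DNF.geom_mul n (by omega)
      obtain ⟨w, hw⟩ := DNF.dickson_n_dvd_dq n q hqn
      have h3 : q ^ n - 1 = (q - 1) * (n * w) := by rw [← hw]; omega
      exact ⟨(q - 1) * w, by rw [h3]; ring⟩
    have hcopq : Nat.Coprime n q := by
      by_contra hnc
      obtain ⟨r, hr, hrn, hrq⟩ := Nat.Prime.not_coprime_iff_dvd.mp hnc
      have h1 := hqn.2.2.2.1 r hr hrn
      have h2 : r ∣ q - (q - 1) := Nat.dvd_sub hrq h1
      have h3 : q - (q - 1) = 1 := by omega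
      rw [h3] at h2
      exact hr.one_lt.ne' (Nat.dvd_one.mp h2)
    have hcoset : ∀ x : F, x ≠ 0 → ∃ k, 1 ≤ k ∧ k ≤ n ∧ inCoset g q n k x := by
      intro x hx
      obtain ⟨j, hj⟩ := hg x hx
      have hinj : Set.InjOn (fun k => dq q k % n) ↑(Finset.Icc 1 n) := by
        have key : ∀ a b : ℕ, 1 ≤ a → b ≤ n → a < b → dq q a % n ≠ dq q b % n := by
          intro a b ha hb hab hmod
          have hba : a + (b - a) = b := by omega
          have hsplit : dq q b = dq q a + q ^ a * dq q (b - a) := by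
            conv_lhs => rw [← hba]
            rw [DNF.dq_add]
          have hle : dq q a ≤ dq q b := by omega
          have hd0 : n ∣ dq q b - dq q a := (Nat.modEq_iff_dvd' hle).mp hmod
          have hrw : dq q b - dq q a = q ^ a * dq q (b - a) := by omega
          rw [hrw] at hd0
          have hd2 : n ∣ dq q (b - a) := (hcopq.pow_right a).dvd_of_dvd_mul_left hd0
          have hd3 := DNF.dickson_dq_dvd n q hqn _ hd2
          have hd4 : 0 < dq q (b - a) := DNF.dq_pos (by omega) (by omega)
          have := Nat.le_of_dvd (by omega) hd3
          omega
        intro a ha b hb heq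
        simp only [Finset.coe_Icc, Set.mem_Icc] at ha hb
        by_contra hne
        rcases lt_or_gt_of_ne hne with h | h
        · exact key a b ha.1 hb.2 h heq
        · exact key b a hb.1 ha.2 h heq.symm
      have himg : Finset.image (fun k => dq q k % n) (Finset.Icc 1 n) = Finset.range n := by
        apply Finset.eq_of_subset_of_card_le
        · intro t ht
          obtain ⟨k, hk, rfl⟩ := Finset.mem_image.mp ht
          exact Finset.mem_range.mpr (Nat.mod_lt _ hn0)
        · rw [Finset.card_range, Finset.card_image_of_injOn hinj, Nat.card_Icc]
          omega
      have hjm : j % n ∈ Finset.range n := Finset.mem_range.mpr (Nat.mod_lt _ hn0)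
      rw [← himg] at hjm
      obtain ⟨k, hk, hkeq⟩ := Finset.mem_image.mp hjm
      rw [Finset.mem_Icc] at hk
      refine ⟨k, hk.1, hk.2, ?_⟩
      have hc1 : 1 ≤ q ^ n - 1 := by omega
      have hle : dq q k ≤ j + (q ^ n - 1) * dq q k := by
        have h1 : 1 * dq q k ≤ (q ^ n - 1) * dq q k := Nat.mul_le_mul_right _ hc1
        omega
      have e1 : ((q ^ n - 1) * dq q k) ≡ 0 [MOD n] :=
        Nat.modEq_zero_iff_dvd.mpr (Dvd.dvd.mul_right hndvd _)
      have e4 : Nat.ModEq n (dq q k) j := hkeq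
      have e2 : dq q k ≡ j + (q ^ n - 1) * dq q k [MOD n] := by
        have e3 : j + (q ^ n - 1) * dq q k ≡ j + 0 [MOD n] := Nat.ModEq.add_left j e1
        calc dq q k ≡ j [MOD n] := e4
          _ = j + 0 := (add_zero j).symm
          _ ≡ j + (q ^ n - 1) * dq q k [MOD n] := e3.symm
      have hD := (Nat.modEq_iff_dvd' hle).mp e2
      have hnt : n * ((j + (q ^ n - 1) * dq q k - dq q k) / n)
          = j + (q ^ n - 1) * dq q k - dq q k := Nat.mul_div_cancel' hD
      refine ⟨(j + (q ^ n - 1) * dq q k - dq q k) / n, ?_⟩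
      calc x = g ^ j := hj
        _ = g ^ j * (g ^ (q ^ n - 1)) ^ dq q k := by rw [hgc1, one_pow, mul_one]
        _ = g ^ (j + (q ^ n - 1) * dq q k) := by rw [← pow_mul, ← pow_add]
        _ = g ^ (dq q k + n * ((j + (q ^ n - 1) * dq q k - dq q k) / n)) := by
            rw [hnt]; congr 1; omega
        _ = g ^ dq q k * (g ^ n) ^ ((j + (q ^ n - 1) * dq q k - dq q k) / n) := by
            rw [pow_add, pow_mul]
    -- basic circ lemmas
    have hqkpos : ∀ k : ℕ, 0 < q ^ k := fun k => Nat.pow_pos (by omega)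
    have hcz : ∀ x : F, circ x 0 = 0 := by
      intro x
      rcases eq_or_ne x 0 with rfl | hx
      · exact hcirc0 0
      · obtain ⟨k, h1, h2, h3⟩ := hcoset x hx
        rw [hcirc k h1 h2 x h3 0, zero_pow (hqkpos k).ne', mul_zero]
    have hco1 : ∀ x : F, circ x 1 = x := by
      intro x
      rcases eq_or_ne x 0 with rfl | hx
      · exact hcirc0 1
      · obtain ⟨k, h1, h2, h3⟩ := hcoset x hx
        rw [hcirc k h1 h2 x h3 1, one_pow, mul_one]
    haveI hfp : Fact p.Prime := ⟨hp⟩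
    haveI hcharp : CharP F p := by
      haveI hc : CharP F (ringChar F) := ringChar.charP F
      have hcp : (ringChar F).Prime := CharP.char_is_prime F (ringChar F)
      obtain ⟨d, hdp, hdc⟩ := FiniteField.card F (ringChar F)
      have hEq : p ^ (l * n) = (ringChar F) ^ (d : ℕ) := by rw [← hqnp, ← hcard, hdc]
      have hpc : p = ringChar F := by
        have h1 : p ∣ (ringChar F) ^ (d : ℕ) := hEq ▸ dvd_pow_self p (by omega)
        have h2 := hp.dvd_of_dvd_pow h1
        exact (Nat.prime_dvd_prime_iff_eq hp hcp).mp h2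
      rw [hpc]
      exact hc
    have hfrob : ∀ (a b : F) (k : ℕ), (a + b) ^ q ^ k = a ^ q ^ k + b ^ q ^ k := by
      intro a b k
      rw [hql, ← pow_mul]
      exact add_pow_char_pow a b p (l * k)
    have hcadd : ∀ x a b : F, circ x (a + b) = circ x a + circ x b := by
      intro x a b
      rcases eq_or_ne x 0 with rfl | hx
      · rw [hcirc0, hcirc0, hcirc0, add_zero]
      · obtain ⟨k, h1, h2, h3⟩ := hcoset x hx
        rw [hcirc k h1 h2 x h3, hcirc k h1 h2 x h3, hcirc k h1 h2 x h3, hfrob, mul_add]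
    have hcneg : ∀ x a : F, circ x (-a) = - circ x a := by
      intro x a
      have h1 := hcadd x a (-a)
      rw [add_neg_cancel, hcz] at h1
      exact eq_neg_of_add_eq_zero_right h1.symm
    have hcne0 : ∀ x a : F, x ≠ 0 → a ≠ 0 → circ x a ≠ 0 := by
      intro x a hx ha
      obtain ⟨k, h1, h2, h3⟩ := hcoset x hx
      rw [hcirc k h1 h2 x h3]
      exact mul_ne_zero hx (pow_ne_zero _ ha)
    have hcinj : ∀ x : F, x ≠ 0 → Function.Injective (circ x) := by
      intro x hx a b hab
      obtain ⟨k, h1, h2, h3⟩ := hcoset x hx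
      rw [hcirc k h1 h2 x h3, hcirc k h1 h2 x h3] at hab
      have h4 : a ^ q ^ k = b ^ q ^ k := mul_left_cancel₀ hx hab
      have h5 : (a - b) ^ q ^ k = 0 := by
        rw [hql, ← pow_mul] at h4 ⊢
        rw [sub_pow_char_pow, h4, sub_self]
      have h6 := (pow_eq_zero_iff (hqkpos k).ne').mp h5
      exact sub_eq_zero.mp h6
    have hcsur : ∀ x : F, x ≠ 0 → Function.Surjective (circ x) :=
      fun x hx => Finite.injective_iff_surjective.mp (hcinj x hx)
    have hqstep : ∀ (x : F) (c : ℕ), x ^ q ^ (c + n) = x ^ q ^ c := by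
      intro x c
      rw [pow_add, mul_comm, pow_mul, hpowcard]
    have hqcongr : ∀ (x : F) (a b : ℕ), a % n = b % n → x ^ q ^ a = x ^ q ^ b := by
      have haux : ∀ (x : F) (c t : ℕ), x ^ q ^ (c + n * t) = x ^ q ^ c := by
        intro x c t
        induction t with
        | zero => simp
        | succ t ih =>
          have hstep : c + n * (t + 1) = (c + n * t) + n := by ring
          rw [hstep, hqstep, ih]
      intro x a b hab
      have h1 : x ^ q ^ a = x ^ q ^ (a % n) := by
        conv_lhs => rw [← Nat.mod_add_div a n]
        exact haux x (a % n) (a / n)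
      have h2 : x ^ q ^ b = x ^ q ^ (b % n) := by
        conv_lhs => rw [← Nat.mod_add_div b n]
        exact haux x (b % n) (b / n)
      rw [h1, h2, hab]
    have hcoset_mul : ∀ (x a : F) (kx ka : ℕ), 1 ≤ kx → kx ≤ n → 1 ≤ ka → ka ≤ n →
        inCoset g q n kx x → inCoset g q n ka a →
        ∃ k', (1 ≤ k' ∧ k' ≤ n ∧ (kx + ka) % n = k' % n) ∧ inCoset g q n k' (circ x a) := by
      intro x a kx ka hkx1 hkxn hka1 hkan hix hja
      obtain ⟨i, hi⟩ := hix
      obtain ⟨j, hj⟩ := hja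
      have hxg : x = g ^ (dq q kx + n * i) := by rw [hi, ← pow_mul, ← pow_add]
      have hag : a = g ^ (dq q ka + n * j) := by rw [hj, ← pow_mul, ← pow_add]
      have hval : circ x a = g ^ (dq q (kx + ka) + n * (i + j * q ^ kx)) := by
        rw [hcirc kx hkx1 hkxn x ⟨i, hi⟩ a, hxg, hag, ← pow_mul, ← pow_add]
        congr 1
        rw [DNF.dq_add]
        ring
      by_cases hcase : kx + ka ≤ n
      · exact ⟨kx + ka, ⟨by omega, hcase, rfl⟩,
          ⟨i + j * q ^ kx, by rw [hval, pow_add, pow_mul]⟩⟩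
      · obtain ⟨w, hw⟩ := DNF.dickson_n_dvd_dq n q hqn
        refine ⟨kx + ka - n, ⟨by omega, by omega, ?_⟩,
          ⟨q ^ (kx + ka - n) * w + (i + j * q ^ kx), ?_⟩⟩
        · have hsum : kx + ka = (kx + ka - n) + n := by omega
          conv_lhs => rw [hsum]
          rw [Nat.add_mod_right]
        · have hsum : kx + ka = (kx + ka - n) + n := by omega
          have hdqq : dq q (kx + ka) = dq q (kx + ka - n) + n * (q ^ (kx + ka - n) * w) := by
            conv_lhs => rw [hsum]
            rw [DNF.dq_add, hw]
            ring
          rw [hval, hdqq, ← pow_mul, ← pow_add]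
          congr 1
          ring
    have hassoc : ∀ x a b : F, circ (circ x a) b = circ x (circ a b) := by
      intro x a b
      rcases eq_or_ne x 0 with rfl | hx
      · rw [hcirc0, hcirc0, hcirc0]
      rcases eq_or_ne a 0 with rfl | ha
      · rw [hcz x, hcirc0 b, hcz x]
      obtain ⟨kx, hkx1, hkxn, hix⟩ := hcoset x hx
      obtain ⟨ka, hka1, hkan, hja⟩ := hcoset a ha
      obtain ⟨k', ⟨hk'1, hk'n, hk'm⟩, hic⟩ :=
        hcoset_mul x a kx ka hkx1 hkxn hka1 hkan hix hja
      rw [hcirc k' hk'1 hk'n _ hic b, hcirc ka hka1 hkan a hja,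
        hcirc kx hkx1 hkxn x hix a, hcirc kx hkx1 hkxn x hix (a * b ^ q ^ ka)]
      have hb : b ^ q ^ k' = b ^ q ^ (ka + kx) := by
        apply hqcongr
        rw [Nat.add_comm ka kx]
        exact hk'm.symm
      rw [hb, mul_pow, ← pow_mul, ← pow_add]
      ring
    have honeL : ∀ lam : F, circ 1 lam = lam := by
      have h1 : inCoset g q n n (1 : F) := by
        obtain ⟨w, hw⟩ := DNF.dickson_n_dvd_dq n q hqn
        have hdqle : dq q n ≤ q ^ n - 1 := by
          have hg1 := DNF.geom_mul n (by omega : 1 ≤ q)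
          have h2 : 1 * dq q n ≤ (q - 1) * dq q n := Nat.mul_le_mul_right _ (by omega)
          omega
        have hwle : w ≤ q ^ n - 1 := by
          have h2 : 1 * w ≤ n * w := Nat.mul_le_mul_right _ hn0
          omega
        obtain ⟨t, ht⟩ : ∃ t, q ^ n - 1 = w + t := ⟨q ^ n - 1 - w, by omega⟩
        refine ⟨t, ?_⟩
        have hexp : dq q n + n * t = n * (q ^ n - 1) := by rw [hw, ht]; ring
        calc (1 : F) = (g ^ (q ^ n - 1)) ^ n := by rw [hgc1, one_pow]
          _ = g ^ (n * (q ^ n - 1)) := by rw [← pow_mul, Nat.mul_comm]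
          _ = g ^ (dq q n + n * t) := by rw [hexp]
          _ = g ^ dq q n * (g ^ n) ^ t := by rw [pow_add, pow_mul]
      intro lam
      rw [hcirc n hn0 (le_refl n) 1 h1, one_mul, hpowcard]
    -- vector lemmas and lines
    have hvz : ∀ w : Fin m → F, (fun i => circ (w i) (0 : F)) = 0 := by
      intro w; funext i; exact hcz (w i)
    have hvone : ∀ w : Fin m → F, (fun i => circ (w i) (1 : F)) = w := by
      intro w; funext i; exact hco1 (w i)
    set Lf : (Fin m → F) → Finset (Fin m → F) :=
      fun w => Finset.image (fun r => fun i => circ (w i) r) Finset.univ with hLf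
    have hLmem : ∀ w : Fin m → F, ∀ r : F, (fun i => circ (w i) r) ∈ Lf w := by
      intro w r; exact Finset.mem_image_of_mem _ (Finset.mem_univ r)
    have hLself : ∀ w : Fin m → F, w ∈ Lf w := by
      intro w
      have h1 := hLmem w 1
      rwa [hvone w] at h1
    have hL0 : ∀ w : Fin m → F, (0 : Fin m → F) ∈ Lf w := by
      intro w
      have h1 := hLmem w 0
      rwa [hvz w] at h1
    have hLsubT : ∀ w ∈ T, ∀ y ∈ Lf w, y ∈ T := by
      intro w hw y hy
      obtain ⟨r, _, rfl⟩ := Finset.mem_image.mp hy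
      exact hT.2.2.2 w hw r
    have hLcard : ∀ w : Fin m → F, w ≠ 0 → (Lf w).card = q ^ n := by
      intro w hw
      obtain ⟨i0, hi0⟩ : ∃ i, w i ≠ 0 := by
        by_contra hno
        push_neg at hno
        exact hw (funext hno)
      have hinj : Function.Injective (fun r => fun i => circ (w i) r) := by
        intro r s hrs
        exact hcinj (w i0) hi0 (congrFun hrs i0)
      rw [Finset.card_image_of_injective _ hinj, Finset.card_univ, hcard]
    have hLtrans : ∀ w : Fin m → F, w ≠ 0 → ∀ y ∈ Lf w, y ≠ 0 → Lf y = Lf w := by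
      intro w hw y hy hy0
      obtain ⟨r, _, rfl⟩ := Finset.mem_image.mp hy
      have hr0 : r ≠ 0 := by
        intro h0
        apply hy0
        rw [h0]
        exact hvz w
      apply Finset.ext
      intro z
      constructor
      · intro hz
        obtain ⟨s, _, rfl⟩ := Finset.mem_image.mp hz
        have heq : (fun i => circ ((fun i => circ (w i) r) i) s)
            = fun i => circ (w i) (circ r s) := by
          funext i
          exact hassoc (w i) r s
        rw [heq]
        exact hLmem w (circ r s)
      · intro hz
        obtain ⟨t, _, rfl⟩ := Finset.mem_image.mp hz
        obtain ⟨s, hs⟩ := hcsur r hr0 t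
        refine Finset.mem_image.mpr ⟨s, Finset.mem_univ s, ?_⟩
        funext i
        show circ (circ (w i) r) s = circ (w i) t
        rw [hassoc (w i) r s, hs]
    -- the partition count
    set Tf := hTfin.toFinset with hTfdef
    have hTfmem : ∀ z, z ∈ Tf ↔ z ∈ T := fun z => Set.Finite.mem_toFinset hTfin
    have hTfcard : Tf.card = T.ncard := (Set.ncard_eq_toFinset_card T hTfin).symm
    set Tf' := Tf.erase 0 with hTf'def
    have h0Tf : (0 : Fin m → F) ∈ Tf := (hTfmem 0).mpr h0T
    have hTf'card : Tf'.card = Tf.card - 1 := Finset.card_erase_of_mem h0Tf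
    have hfib := Finset.card_eq_sum_card_fiberwise
      (f := Lf) (s := Tf') (t := Tf'.image Lf) (fun x hx => Finset.mem_image_of_mem _ hx)
    have hfibval : ∀ b ∈ Tf'.image Lf,
        (Tf'.filter (fun x => Lf x = b)).card = q ^ n - 1 := by
      intro b hb
      obtain ⟨x0, hx0, rfl⟩ := Finset.mem_image.mp hb
      have hx0T : x0 ∈ T := (hTfmem x0).mp (Finset.mem_of_mem_erase hx0)
      have hx00 : x0 ≠ 0 := Finset.ne_of_mem_erase hx0
      have hfeq : Tf'.filter (fun x => Lf x = Lf x0) = (Lf x0).erase 0 := by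
        apply Finset.ext
        intro y
        simp only [Finset.mem_filter, Finset.mem_erase]
        constructor
        · rintro ⟨hy1, hy2⟩
          have hy0 : y ≠ 0 := Finset.ne_of_mem_erase hy1
          refine ⟨hy0, ?_⟩
          rw [← hy2]
          exact hLself y
        · rintro ⟨hy0, hyL⟩
          refine ⟨Finset.mem_erase.mpr ⟨hy0, (hTfmem y).mpr (hLsubT x0 hx0T y hyL)⟩,
            hLtrans x0 hx00 y hyL hy0⟩
      rw [hfeq, Finset.card_erase_of_mem (hL0 x0), hLcard x0 hx00]
    rw [Finset.sum_congr rfl hfibval, Finset.sum_const, smul_eq_mul] at hfib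
    have hdvd1 : (q ^ n - 1) ∣ T.ncard - 1 := by
      refine ⟨(Tf'.image Lf).card, ?_⟩
      have hcomm : (Tf'.image Lf).card * (q ^ n - 1)
          = (q ^ n - 1) * (Tf'.image Lf).card := Nat.mul_comm _ _
      omega
    -- l * n divides e
    have hlne : (l * n) ∣ e := by
      rw [hTe, hqnp] at hdvd1
      by_contra hnd
      have hr0 : e % (l * n) ≠ 0 := fun h => hnd (Nat.dvd_of_mod_eq_zero h)
      have hrlt : e % (l * n) < l * n := Nat.mod_lt _ hln0
      have hMle : 1 ≤ p ^ (l * n) := Nat.one_le_pow _ _ hp.pos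
      have hsplit : p ^ e = (p ^ (l * n)) ^ (e / (l * n)) * p ^ (e % (l * n)) := by
        rw [← pow_mul, ← pow_add]
        congr 1
        exact (Nat.div_add_mod e (l * n)).symm
      have hbase : p ^ (l * n) ≡ 1 [MOD p ^ (l * n) - 1] :=
        ((Nat.modEq_iff_dvd' hMle).mpr dvd_rfl).symm
      have hm1 : (p ^ (l * n)) ^ (e / (l * n)) ≡ 1 ^ (e / (l * n)) [MOD p ^ (l * n) - 1] :=
        hbase.pow _
      have hm2 : p ^ e ≡ p ^ (e % (l * n)) [MOD p ^ (l * n) - 1] := by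
        calc p ^ e = (p ^ (l * n)) ^ (e / (l * n)) * p ^ (e % (l * n)) := hsplit
          _ ≡ 1 ^ (e / (l * n)) * p ^ (e % (l * n)) [MOD p ^ (l * n) - 1] :=
              Nat.ModEq.mul_right _ hm1
          _ = p ^ (e % (l * n)) := by rw [one_pow, one_mul]
      have h1le : 1 ≤ p ^ e := Nat.one_le_pow _ _ hp.pos
      have hm3 : p ^ e ≡ 1 [MOD p ^ (l * n) - 1] :=
        ((Nat.modEq_iff_dvd' h1le).mpr hdvd1).symm
      have hm4 : p ^ (e % (l * n)) ≡ 1 [MOD p ^ (l * n) - 1] := hm2.symm.trans hm3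
      have h1ler : 1 ≤ p ^ (e % (l * n)) := Nat.one_le_pow _ _ hp.pos
      have hd5 : (p ^ (l * n) - 1) ∣ p ^ (e % (l * n)) - 1 :=
        (Nat.modEq_iff_dvd' h1ler).mp hm4.symm
      have hlt5 : p ^ (e % (l * n)) < p ^ (l * n) :=
        Nat.pow_lt_pow_right hp.one_lt hrlt
      have h2r : 2 ≤ p ^ (e % (l * n)) := Nat.one_lt_pow hr0 hp.one_lt
      have hle6 := Nat.le_of_dvd (by omega) hd5
      have hqn3 : 3 ≤ p ^ (l * n) := by rw [← hqnp]; omega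
      omega
    obtain ⟨kk, hkk⟩ := hlne
    have hTk : T.ncard = (q ^ n) ^ kk := by
      rw [hTe, hqnp, ← pow_mul, ← hkk]
    have hkk2 : 2 ≤ kk := by
      by_contra hlt
      rcases (by omega : kk = 0 ∨ kk = 1) with rfl | rfl
      · rw [pow_zero] at hTk
        exact hncard1 hTk
      · rw [pow_one] at hTk
        obtain ⟨w, hwT, hw0⟩ : ∃ w, w ∈ T ∧ w ≠ 0 := by
          by_contra hno
          push_neg at hno
          have hsub : T ⊆ {0} := fun x hx => hno x hx
          have hle1 := Set.ncard_le_ncard hsub (Set.finite_singleton 0)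
          rw [Set.ncard_singleton] at hle1
          omega
        have hsub2 : (↑(Lf w) : Set (Fin m → F)) ⊆ T := fun y hy => hLsubT w hwT y hy
        have hcardeq : (↑(Lf w) : Set (Fin m → F)).ncard = q ^ n := by
          rw [Set.ncard_coe_finset, hLcard w hw0]
        have hTeq : (↑(Lf w) : Set (Fin m → F)) = T :=
          Set.eq_of_subset_of_ncard_le hsub2 (by rw [hcardeq, hTk]) hTfin
        have hgw : gen ({w} : Set (Fin m → F)) = T := by
          apply Set.Subset.antisymm
          · exact (hgen _).2.2 T hT
              (by intro z hz; rw [Set.mem_singleton_iff] at hz; subst hz; exact hwT)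
          · rw [← hTeq]
            intro y hy
            rw [Finset.mem_coe] at hy
            obtain ⟨r, _, rfl⟩ := Finset.mem_image.mp hy
            exact (hgen _).1.2.2.2 w ((hgen _).2.1 (Set.mem_singleton w)) r
        have hcon := hseed.2 {w} (by rw [Finset.coe_singleton]; exact hgw)
        simp at hcon
    -- upper bound via the universal relation R-subgroup
    have hkup : kk ≤ q ^ n + 1 := by
      set Ω : Set ((F × F) → F) := {z | ∃ c : F → F, ∃ d : F,
        (∀ x a : F, z (x, circ x a) = circ x (c a)) ∧ (∀ y : F, z (0, y) = circ y d)}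
        with hΩdef
      set hmap : ((F × F) → F) → (Fin m → F) := fun z => fun i => z (u i, v i) with hhdef
      have hU : (fun pr : F × F => pr.1) ∈ Ω :=
        ⟨fun _ => 1, 0, fun x a => (hco1 x).symm, fun y => (hcz y).symm⟩
      have hV : (fun pr : F × F => pr.2) ∈ Ω :=
        ⟨fun a => a, 1, fun x a => rfl, fun y => (hco1 y).symm⟩
      have hRS : IsRSubgroup circ (hmap '' Ω) := by
        refine ⟨⟨fun _ => 0, ⟨fun _ => 0, 0, fun x a => (hcz x).symm, fun y => (hcz y).symm⟩,
          funext fun i => rfl⟩, ?_, ?_, ?_⟩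
        · rintro s ⟨z1, ⟨c1, d1, hz11, hz12⟩, rfl⟩ t ⟨z2, ⟨c2, d2, hz21, hz22⟩, rfl⟩
          refine ⟨z1 + z2, ⟨fun a => c1 a + c2 a, d1 + d2, ?_, ?_⟩, funext fun i => rfl⟩
          · intro x a
            show z1 (x, circ x a) + z2 (x, circ x a) = _
            rw [hz11, hz21, hcadd]
          · intro y
            show z1 (0, y) + z2 (0, y) = _
            rw [hz12, hz22, hcadd]
        · rintro s ⟨z1, ⟨c1, d1, hz11, hz12⟩, rfl⟩
          refine ⟨-z1, ⟨fun a => -(c1 a), -d1, ?_, ?_⟩, funext fun i => rfl⟩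
          · intro x a
            show -(z1 (x, circ x a)) = _
            rw [hz11, hcneg]
          · intro y
            show -(z1 (0, y)) = _
            rw [hz12, hcneg]
        · rintro s ⟨z1, ⟨c1, d1, hz11, hz12⟩, rfl⟩ r
          refine ⟨fun pr => circ (z1 pr) r, ⟨fun a => circ (c1 a) r, circ d1 r, ?_, ?_⟩,
            funext fun i => rfl⟩
          · intro x a
            show circ (z1 (x, circ x a)) r = _
            rw [hz11, hassoc]
          · intro y
            show circ (z1 (0, y)) r = _
            rw [hz12, hassoc]
      have hTsub : T ⊆ hmap '' Ω := by
        rw [← hVgen]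
        apply (hgen _).2.2 _ hRS
        rw [hVcoe]
        intro x hx
        rcases hx with rfl | hx
        · exact ⟨_, hU, funext fun i => rfl⟩
        · rw [Set.mem_singleton_iff] at hx
          subst hx
          exact ⟨_, hV, funext fun i => rfl⟩
      have hinjΩ : Set.InjOn
          (fun z : (F × F) → F => ((fun a => z (1, a)), z (0, 1))) Ω := by
        rintro z1 ⟨c1, d1, hz11, hz12⟩ z2 ⟨c2, d2, hz21, hz22⟩ heq
        have hfst : ∀ a : F, z1 (1, a) = z2 (1, a) := fun a =>
          congrFun (congrArg Prod.fst heq) a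
        have hsnd : z1 (0, 1) = z2 (0, 1) := congrArg Prod.snd heq
        funext pr
        obtain ⟨x, y⟩ := pr
        rcases eq_or_ne x 0 with rfl | hx0
        · have hd : d1 = d2 := by
            have h1 := hz12 1
            have h2 := hz22 1
            rw [honeL d1] at h1
            rw [honeL d2] at h2
            rw [← h1, ← h2]
            exact hsnd
          rw [hz12 y, hz22 y, hd]
        · obtain ⟨a, ha⟩ := hcsur x hx0 y
          have hc1a : c1 a = z1 (1, a) := by
            have h1 := hz11 1 a
            rw [honeL a, honeL (c1 a)] at h1
            exact h1.symm
          have hc2a : c2 a = z2 (1, a) := by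
            have h2 := hz21 1 a
            rw [honeL a, honeL (c2 a)] at h2
            exact h2.symm
          rw [← ha, hz11 x a, hz21 x a, hc1a, hc2a, hfst a]
      have hcount : T.ncard ≤ (q ^ n) ^ (q ^ n + 1) := by
        have h1 : T.ncard ≤ (hmap '' Ω).ncard := Set.ncard_le_ncard hTsub (Set.toFinite _)
        have h2 : (hmap '' Ω).ncard ≤ Ω.ncard := Set.ncard_image_le (Set.toFinite _)
        have h3 : Ω.ncard
            = ((fun z : (F × F) → F => ((fun a => z (1, a)), z (0, 1))) '' Ω).ncard :=
          (Set.ncard_image_of_injOn hinjΩ).symm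
        have h4 : ((fun z : (F × F) → F => ((fun a => z (1, a)), z (0, 1))) '' Ω).ncard
            ≤ Nat.card ((F → F) × F) := by
          rw [← Set.ncard_univ]
          exact Set.ncard_le_ncard (Set.subset_univ _) Set.finite_univ
        have h5 : Nat.card ((F → F) × F) = (q ^ n) ^ (q ^ n) * q ^ n := by
          rw [Nat.card_eq_fintype_card, Fintype.card_prod, Fintype.card_fun, hcard]
        have h6 : (q ^ n) ^ (q ^ n) * q ^ n = (q ^ n) ^ (q ^ n + 1) := by
          rw [pow_succ]
        exact le_trans h1 (le_trans h2 (le_trans (le_of_eq h3)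
          (le_trans h4 (le_of_eq (h5.trans h6)))))
      rw [hTk] at hcount
      exact (Nat.pow_le_pow_iff_right (by omega)).mp hcount
    exact ⟨kk, hkk2, hkup, hTk⟩
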